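/- arXiv:math/0101006 — 3 statements merged into one kernel-verified Lean document; each statement's English description precedes it below -/
import Mathlib

section
/- In the Hecke algebra of type A_1 with parameter q > 1, setting θ = q^{-1/2} T_{t_1}, the trace satisfies τ(θ^n) = 0 unless n = −2k with k ∈ Z_{≥0}, τ(θ^0) = 1, and for k > 0: τ(θ^{-2k}) = (q−1)(q^k − q^{-k})/(q+1). -/
/-- The extended affine Weyl group of type `A₁` is `W = W₀ ⋉ ℤ` with `W₀ = {e, s}`;
we encode the element `t_n s^b` as the pair `(n, b) : ℤ × Bool`.  Multiplication:
`t_m s^b · t_n s^c = t_{m + (−1)^b n} s^{b xor c}`. -/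
def A1mul (p p' : ℤ × Bool) : ℤ × Bool :=
  (p.1 + (if p.2 then -p'.1 else p'.1), xor p.2 p'.2)

/-- The length function on `W`: `l(t_n) = |n|` and `l(t_n s) = |n − 1|`
(specializing formula (1.1) to the `A₁` root datum `X = Y = ℤ`, `R₀ = {±2}`,
`R₀^∨ = {±1}`).  In particular `ω = t_1 s` has length `0`. -/
def A1len (p : ℤ × Bool) : ℕ :=
  if p.2 then (p.1 - 1).natAbs else p.1.natAbs

noncomputable def cF (q : ℝ) (n : ℕ) (a : ℤ) : ℂ :=
  (if a = -(n:ℤ) then 1 else 0) +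
  (if -(n:ℤ) ≤ a ∧ a ≤ (n:ℤ) ∧ (2:ℤ) ∣ (a + n) then
    ((q:ℂ) - 1) * ((q:ℂ) ^ ((n:ℤ) - |a|) - 1) / ((q:ℂ) + 1) else 0)

noncomputable def cG (q : ℝ) (n : ℕ) (a : ℤ) : ℂ :=
  if 2 - (n:ℤ) ≤ a ∧ a ≤ (n:ℤ) ∧ (2:ℤ) ∣ (a + n) then
    -((q:ℂ) - 1) * ((q:ℂ) ^ ((n:ℤ) - |a - 1|) + 1) / ((q:ℂ) + 1) else 0

noncomputable def cc (q : ℝ) (n : ℕ) (w : ℤ × Bool) : ℂ :=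
  if w.2 then cG q n w.1 else cF q n w.1

noncomputable def Ac (q : ℝ) (w : ℤ × Bool) : ℂ :=
  if (if w.2 then 2 else 1) ≤ w.1 then (q:ℂ) else 1

noncomputable def Bc (q : ℝ) (w : ℤ × Bool) : ℂ :=
  if (if w.2 then 2 else 1) ≤ w.1 then 0 else -((q:ℂ) - 1)

noncomputable def Sfin (n : ℕ) : Finset (ℤ × Bool) :=
  Finset.Icc (-(n:ℤ)) (n:ℤ) ×ˢ (Finset.univ : Finset Bool)

lemma mem_Sfin (n : ℕ) (w : ℤ × Bool) : w ∈ Sfin n ↔ -(n:ℤ) ≤ w.1 ∧ w.1 ≤ (n:ℤ) := by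
  simp [Sfin, Finset.mem_product]

def shiftE : ℤ × Bool ↪ ℤ × Bool :=
  ⟨fun w => (w.1 - 1, w.2), by
    rintro ⟨a, b⟩ ⟨c, d⟩ h
    simp only [Prod.mk.injEq] at h ⊢
    exact ⟨by omega, h.2⟩⟩

lemma shiftE_apply (w : ℤ × Bool) : shiftE w = (w.1 - 1, w.2) := rfl

def reflE : ℤ × Bool ↪ ℤ × Bool :=
  ⟨fun w => (1 - w.1, !w.2), by
    rintro ⟨a, b⟩ ⟨c, d⟩ h
    simp only [Prod.mk.injEq] at h ⊢
    exact ⟨by omega, Bool.not_inj h.2⟩⟩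

lemma reflE_apply (w : ℤ × Bool) : reflE w = (1 - w.1, !w.2) := rfl

lemma cc_false (q : ℝ) (n : ℕ) (a : ℤ) : cc q n (a, false) = cF q n a := rfl
lemma cc_true (q : ℝ) (n : ℕ) (a : ℤ) : cc q n (a, true) = cG q n a := rfl

lemma cc_zero (q : ℝ) (n : ℕ) (a : ℤ) (b : Bool) (h : (n:ℤ) < |a|) :
    cc q n (a, b) = 0 := by
  have h1 : a < -(n:ℤ) ∨ (n:ℤ) < a := by
    rcases le_or_gt 0 a with h0 | h0
    · right; rwa [abs_of_nonneg h0] at h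
    · left; rw [abs_of_neg h0] at h; omega
  rcases h1 with h1 | h1 <;> cases b
  all_goals
    first
      | (rw [cc_false, cF, if_neg (by omega), if_neg (by omega)]; ring)
      | (rw [cc_true, cG, if_neg (by omega)])

lemma keyF (q : ℝ) (hq : 1 < q) (n : ℕ) (a : ℤ) :
    cF q (n+1) a = cF q n (a+1) * (if 1 ≤ a + 1 then (q:ℂ) else 1)
      + cG q n (1 - a) * (if 2 ≤ 1 - a then 0 else -((q:ℂ) - 1)) := by
  have hq0 : (q:ℂ) ≠ 0 := by
    simpa using Complex.ofReal_ne_zero.mpr (by linarith : q ≠ 0)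
  have hq1 : (q:ℂ) + 1 ≠ 0 := by
    have : ((q + 1 : ℝ) : ℂ) ≠ 0 := Complex.ofReal_ne_zero.mpr (by linarith)
    simpa using this
  simp only [cF, cG, Nat.cast_add, Nat.cast_one]
  by_cases hpar : (2:ℤ) ∣ (a + n)
  · rw [if_neg (by omega), if_neg (by omega), if_neg (by omega), if_neg (by omega),
      if_neg (show ¬(2 - (n:ℤ) ≤ 1 - a ∧ 1 - a ≤ (n:ℤ) ∧ (2:ℤ) ∣ 1 - a + (n:ℤ)) by omega)]
    ring
  · by_cases h1 : a < -(n:ℤ) - 1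
    · rw [if_neg (by omega), if_neg (by omega), if_neg (by omega), if_neg (by omega),
        if_neg (by omega), if_neg (by omega), if_pos (by omega)]
      ring
    by_cases h2 : a = -(n:ℤ) - 1
    · rw [if_pos (by omega), if_pos (by omega), if_pos (by omega), if_pos (by omega),
        if_neg (by omega), if_neg (by omega), if_pos (by omega)]
      rw [show (n:ℤ) + 1 - |a| = 0 by rw [abs_of_nonpos (by omega)]; omega,
        show (n:ℤ) - |a + 1| = 0 by rw [abs_of_nonpos (by omega)]; omega]
      norm_num
    by_cases h3 : a ≤ -1
    · -- region 3 : -(n+1) < a ≤ -1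
      rw [if_neg (by omega), if_pos (by omega), if_neg (by omega), if_pos (by omega),
        if_neg (by omega), if_pos (by omega), if_pos (by omega)]
      rw [abs_of_nonpos (by omega : a ≤ 0), abs_of_nonpos (by omega : a + 1 ≤ 0),
        show (n:ℤ) + 1 - -a = (n:ℤ) - -(a+1) by ring]
      ring
    by_cases h4 : a ≤ (n:ℤ) - 1
    · -- region 4 : 0 ≤ a ≤ n - 1
      rw [if_neg (by omega), if_pos (by omega), if_neg (by omega), if_pos (by omega),
        if_pos (by omega), if_pos (by omega), if_neg (by omega)]
      rw [abs_of_nonneg (by omega : (0:ℤ) ≤ a), abs_of_nonneg (by omega : (0:ℤ) ≤ a + 1),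
        abs_of_nonpos (by omega : 1 - a - 1 ≤ 0)]
      rw [show (n:ℤ) + 1 - a = ((n:ℤ) - (a+1)) + 1 + 1 by ring,
        show (n:ℤ) - -(1 - a - 1) = ((n:ℤ) - (a+1)) + 1 by ring,
        zpow_add_one₀ hq0, zpow_add_one₀ hq0]
      ring
    by_cases h5 : a = (n:ℤ) + 1
    · -- region 6 : a = n + 1  (a = n excluded by parity)
      rw [if_neg (by omega), if_pos (by omega), if_neg (by omega), if_neg (by omega),
        if_pos (by omega), if_neg (by omega), if_neg (by omega)]
      rw [show (n:ℤ) + 1 - |a| = 0 by rw [abs_of_nonneg (by omega)]; omega]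
      norm_num
    · -- region 5/7 : a ≥ n + 2 : all zero
      rw [if_neg (by omega), if_neg (by omega), if_neg (by omega), if_neg (by omega),
        if_pos (by omega), if_neg (by omega), if_neg (by omega)]
      ring

lemma keyG (q : ℝ) (hq : 1 < q) (n : ℕ) (a : ℤ) :
    cG q (n+1) a = cG q n (a+1) * (if 2 ≤ a + 1 then (q:ℂ) else 1)
      + cF q n (1 - a) * (if 1 ≤ 1 - a then 0 else -((q:ℂ) - 1)) := by
  have hq0 : (q:ℂ) ≠ 0 := by
    simpa using Complex.ofReal_ne_zero.mpr (by linarith : q ≠ 0)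
  have hq1 : (q:ℂ) + 1 ≠ 0 := by
    have : ((q + 1 : ℝ) : ℂ) ≠ 0 := Complex.ofReal_ne_zero.mpr (by linarith)
    simpa using this
  simp only [cF, cG, Nat.cast_add, Nat.cast_one]
  by_cases hpar : (2:ℤ) ∣ (a + n)
  · rw [if_neg (by omega), if_neg (by omega),
      if_neg (show ¬(1 - a = -(n:ℤ)) by omega),
      if_neg (show ¬(-(n:ℤ) ≤ 1 - a ∧ 1 - a ≤ (n:ℤ) ∧ (2:ℤ) ∣ 1 - a + (n:ℤ)) by omega)]
    ring
  · by_cases h1 : a ≤ -(n:ℤ)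
    · rw [if_neg (by omega), if_neg (by omega), if_neg (by omega), if_neg (by omega),
        if_neg (by omega), if_pos (by omega)]
      ring
    by_cases h2 : a ≤ 0
    · -- region 2' : 1-n ≤ a ≤ 0
      rw [if_pos (by omega), if_pos (by omega), if_neg (by omega), if_neg (by omega),
        if_pos (show (1:ℤ) ≤ 1 - a by omega)]
      rw [abs_of_nonpos (by omega : a - 1 ≤ 0), abs_of_nonpos (by omega : a + 1 - 1 ≤ 0),
        show (n:ℤ) + 1 - -(a - 1) = (n:ℤ) - -(a + 1 - 1) by ring]
      ring
    by_cases h3 : a ≤ (n:ℤ) - 1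
    · -- region 3' : 1 ≤ a ≤ n - 1
      rw [if_pos (by omega), if_pos (by omega), if_pos (by omega), if_neg (by omega),
        if_pos (by omega), if_neg (by omega)]
      rw [abs_of_nonneg (by omega : (0:ℤ) ≤ a - 1), abs_of_nonneg (by omega : (0:ℤ) ≤ a + 1 - 1),
        abs_of_nonpos (by omega : 1 - a ≤ 0)]
      rw [show (n:ℤ) + 1 - (a - 1) = ((n:ℤ) - (a + 1 - 1)) + 1 + 1 by ring,
        show (n:ℤ) - -(1 - a) = ((n:ℤ) - (a + 1 - 1)) + 1 by ring,
        zpow_add_one₀ hq0, zpow_add_one₀ hq0]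
      ring
    by_cases h4 : a = (n:ℤ) + 1
    · -- region 5' : a = n + 1
      rw [if_pos (by omega), if_neg (by omega), if_pos (by omega), if_pos (by omega),
        if_pos (by omega), if_neg (by omega)]
      rw [abs_of_nonneg (by omega : (0:ℤ) ≤ a - 1),
        show (n:ℤ) + 1 - (a - 1) = 1 by omega,
        abs_of_nonpos (by omega : 1 - a ≤ 0),
        show (n:ℤ) - -(1 - a) = 0 by omega, zpow_one, zpow_zero]
      field_simp
      ring
    · -- region 6' : a ≥ n + 2
      rw [if_neg (by omega), if_neg (by omega), if_pos (by omega), if_neg (by omega),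
        if_neg (by omega), if_neg (by omega)]
      ring


lemma keyCC (q : ℝ) (hq : 1 < q) (n : ℕ) (w : ℤ × Bool) :
    cc q n (w.1 + 1, w.2) * Ac q (w.1 + 1, w.2)
      + cc q n (1 - w.1, !w.2) * Bc q (1 - w.1, !w.2) = cc q (n+1) w := by
  obtain ⟨a, b⟩ := w
  cases b
  · have h := keyF q hq n a
    simp only [cc_false, cc_true, Bool.not_false] at *
    rw [show Ac q (a + 1, false) = (if 1 ≤ a + 1 then (q:ℂ) else 1) from rfl,
      show Bc q (1 - a, true) = (if 2 ≤ 1 - a then 0 else -((q:ℂ) - 1)) from rfl]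
    exact h.symm
  · have h := keyG q hq n a
    simp only [cc_false, cc_true, Bool.not_true] at *
    rw [show Ac q (a + 1, true) = (if 2 ≤ a + 1 then (q:ℂ) else 1) from rfl,
      show Bc q (1 - a, false) = (if 1 ≤ 1 - a then 0 else -((q:ℂ) - 1)) from rfl]
    exact h.symm

section Hecke
variable {H : Type*} [Ring H] [Algebra ℂ H] (q : ℝ) (T : ℤ × Bool → H)
variable (hT1 : T (0, false) = 1)
variable (hTmul : ∀ p p' : ℤ × Bool, A1len (A1mul p p') = A1len p + A1len p' →
    T (A1mul p p') = T p * T p')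
variable (hquad_s : (T (0, true) + 1) * (T (0, true) - (q : ℂ) • 1) = 0)
include hTmul

lemma omega_mul (a : ℤ) (b : Bool) : T (1 - a, !b) = T (1, true) * T (a, b) := by
  have e : A1mul (1, true) (a, b) = (1 - a, !b) := by
    simp only [A1mul, if_true, Bool.true_xor]
    exact Prod.ext (by ring) rfl
  have h := hTmul (1, true) (a, b) (by rw [e]; cases b <;> simp [A1len] <;> omega)
  rwa [e] at h

lemma s_mul_false (a : ℤ) (ha : 0 ≤ a) : T (-a, true) = T (0, true) * T (a, false) := by
  have e : A1mul (0, true) (a, false) = (-a, true) := by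
    simp only [A1mul, if_true, Bool.true_xor]
    exact Prod.ext (by ring) rfl
  have h := hTmul (0, true) (a, false) (by rw [e]; simp [A1len]; omega)
  rwa [e] at h

lemma s_mul_true (a : ℤ) (ha : 1 ≤ a) : T (-a, false) = T (0, true) * T (a, true) := by
  have e : A1mul (0, true) (a, true) = (-a, false) := by
    simp only [A1mul, if_true, Bool.true_xor]
    exact Prod.ext (by ring) rfl
  have h := hTmul (0, true) (a, true) (by rw [e]; simp [A1len]; omega)
  rwa [e] at h

include hT1 in
lemma ww_one : T (1, true) * T (1, true) = 1 := by
  have h := omega_mul T hTmul 1 true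
  simp only [sub_self, Bool.not_true] at h
  rw [← h, hT1]

lemma wTs : T (1, false) = T (1, true) * T (0, true) := by
  have h := omega_mul T hTmul 0 true
  simpa using h

include hquad_s in
lemma TsSq : T (0, true) * T (0, true) = ((q:ℂ) - 1) • T (0, true) + (q:ℂ) • 1 := by
  have h := hquad_s
  rw [mul_sub, add_mul, one_mul, mul_smul_comm, mul_one] at h
  -- h : T s * T s + T s - ((q:ℂ) • T s + (q:ℂ) • 1) = 0  (shape to confirm)
  have h2 : T (0, true) * T (0, true) + T (0, true) = (q:ℂ) • T (0, true) + (q:ℂ) • 1 := by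
    have := sub_eq_zero.mp h
    linear_combination (norm := module) this
  have h3 := eq_sub_of_add_eq h2
  rw [h3]
  module

include hquad_s in
lemma del_true (a : ℤ) (ha : a ≤ 0) :
    T (0, true) * T (a, true) = (q:ℂ) • T (-a, false) + ((q:ℂ) - 1) • T (a, true) := by
  have h0 : T (a, true) = T (0, true) * T (-a, false) := by
    have h := s_mul_false T hTmul (-a) (by omega)
    rwa [neg_neg] at h
  rw [h0, ← mul_assoc, TsSq q T hTmul hquad_s, add_mul, smul_mul_assoc, smul_mul_assoc, one_mul,
    ← h0]
  module

include hquad_s in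
lemma del_false (a : ℤ) (ha : a ≤ -1) :
    T (0, true) * T (a, false) = (q:ℂ) • T (-a, true) + ((q:ℂ) - 1) • T (a, false) := by
  have h0 : T (a, false) = T (0, true) * T (-a, true) := by
    have h := s_mul_true T hTmul (-a) (by omega)
    rwa [neg_neg] at h
  rw [h0, ← mul_assoc, TsSq q T hTmul hquad_s, add_mul, smul_mul_assoc, smul_mul_assoc, one_mul,
    ← h0]
  module

include hquad_s in
lemma Lmul (a : ℤ) (b : Bool) :
    (T (0, true) * T (1, true) - ((q:ℂ) - 1) • T (1, true)) * T (a, b)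
      = (if (if b then 2 else 1) ≤ a then (q:ℂ) else 1) • T (a - 1, b)
        + (if (if b then 2 else 1) ≤ a then 0 else -((q:ℂ) - 1)) • T (1 - a, !b) := by
  rw [sub_mul, smul_mul_assoc, mul_assoc, ← omega_mul T hTmul a b]
  cases b
  · -- b = false : threshold 1
    simp only [Bool.not_false]
    rw [show (if (false = true) then (2:ℤ) else 1) = 1 from rfl]
    by_cases hc : (1:ℤ) ≤ a
    · rw [if_pos hc, if_pos hc, show a - 1 = -(1 - a) by ring,
        del_true q T hTmul hquad_s (1 - a) (by omega)]
      module
    · rw [if_neg hc, if_neg hc, show a - 1 = -(1 - a) by ring,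
        ← s_mul_true T hTmul (1 - a) (by omega)]
      module
  · -- b = true : threshold 2
    simp only [Bool.not_true]
    simp only [if_true]
    by_cases hc : (2:ℤ) ≤ a
    · rw [if_pos hc, if_pos hc, show a - 1 = -(1 - a) by ring,
        del_false q T hTmul hquad_s (1 - a) (by omega)]
      module
    · rw [if_neg hc, if_neg hc, show a - 1 = -(1 - a) by ring,
        ← s_mul_false T hTmul (1 - a) (by omega)]
      module

end Hecke

/- STATEMENT 7: In the Hecke algebra of type `A₁` with parameter `q > 1`, setting
`θ = q^{-1/2} T_{t_1}`, the trace satisfies `τ(θ^n) = 0` unless `n = −2k` with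
`k ∈ ℤ_{≥0}`, `τ(θ⁰) = 1`, and for `k > 0`,
`τ(θ^{−2k}) = (q−1)(q^k − q^{−k})/(q+1)`.

The two affine simple reflections are `s = (0, true)` and `s_a = t_2 s = (2, true)`;
`T` satisfies the braid/length relations and the quadratic relations at both. -/
set_option maxHeartbeats 1000000 in
theorem trace_powers_theta_A1
    (q : ℝ) (hq : 1 < q)
    (H : Type*) [Ring H] [Algebra ℂ H]
    (T : ℤ × Bool → H)
    (hTindep : LinearIndependent ℂ T)
    (hT1 : T (0, false) = 1)
    (hTmul : ∀ p p' : ℤ × Bool, A1len (A1mul p p') = A1len p + A1len p' →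
        T (A1mul p p') = T p * T p')
    (hquad_s : (T (0, true) + 1) * (T (0, true) - (q : ℂ) • 1) = 0)
    (hquad_sa : (T (2, true) + 1) * (T (2, true) - (q : ℂ) • 1) = 0)
    (τ : H →ₗ[ℂ] ℂ)
    (hτ : ∀ p : ℤ × Bool, τ (T p) = if p = (0, false) then 1 else 0)
    (θ : Hˣ)
    (hθ : (θ : H) = (((Real.sqrt q)⁻¹ : ℝ) : ℂ) • T (1, false)) :
    (∀ n : ℤ, (¬ ∃ k : ℤ, 0 ≤ k ∧ n = -(2 * k)) → τ ((θ ^ n : Hˣ) : H) = 0)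
    ∧ τ ((θ ^ (0 : ℤ) : Hˣ) : H) = 1
    ∧ (∀ k : ℤ, 0 < k →
        τ ((θ ^ (-(2 * k)) : Hˣ) : H)
          = (((q - 1) * (q ^ k - q ^ (-k)) / (q + 1) : ℝ) : ℂ)) := by
  have hq0R : (0:ℝ) < q := by linarith
  have hqC0 : (q:ℂ) ≠ 0 := Complex.ofReal_ne_zero.mpr (ne_of_gt hq0R)
  have hqC1 : (q:ℂ) + 1 ≠ 0 := by
    have : ((q + 1 : ℝ) : ℂ) ≠ 0 := Complex.ofReal_ne_zero.mpr (by linarith)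
    simpa using this
  set v : ℂ := (((Real.sqrt q)⁻¹ : ℝ) : ℂ) with hv
  have hvv : v * v = (q:ℂ)⁻¹ := by
    have h1 : Real.sqrt q * Real.sqrt q = q := Real.mul_self_sqrt hq0R.le
    have h2 : ((Real.sqrt q)⁻¹ * (Real.sqrt q)⁻¹ : ℝ) = q⁻¹ := by
      rw [← mul_inv, h1]
    calc v * v = (((Real.sqrt q)⁻¹ * (Real.sqrt q)⁻¹ : ℝ) : ℂ) := by rw [hv]; push_cast; ring
      _ = ((q⁻¹ : ℝ) : ℂ) := by rw [h2]
      _ = (q:ℂ)⁻¹ := by push_cast; ring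
  set X : H := T (0, true) * T (1, true) - ((q:ℂ) - 1) • T (1, true) with hX
  set Y : H := v • X with hY
  have hcore : T (1, true) * T (0, true) * X = (q:ℂ) • 1 := by
    have h1 : T (1, true) * T (0, true) * (T (0, true) * T (1, true))
        = T (1, true) * (T (0, true) * T (0, true)) * T (1, true) := by
      rw [← mul_assoc, mul_assoc (T (1, true)) (T (0, true)) (T (0, true))]
    rw [hX, mul_sub, mul_smul_comm, h1, TsSq q T hTmul hquad_s, mul_add, add_mul,
      mul_smul_comm, smul_mul_assoc, mul_smul_comm, mul_one, smul_mul_assoc,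
      ww_one T hT1 hTmul]
    module
  have hθY : (↑θ : H) * Y = 1 := by
    rw [hθ, wTs T hTmul, hY]
    rw [smul_mul_assoc, mul_smul_comm, smul_smul, hcore, smul_smul, hvv,
      inv_mul_cancel₀ hqC0, one_smul]
  have hYval : (↑(θ⁻¹) : H) = Y := by
    calc (↑(θ⁻¹) : H) = ↑(θ⁻¹) * ((↑θ : H) * Y) := by rw [hθY, mul_one]
      _ = (↑(θ⁻¹) * ↑θ) * Y := by rw [mul_assoc]
      _ = Y := by rw [← Units.val_mul, inv_mul_cancel, Units.val_one, one_mul]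
  have hstep : ∀ n : ℕ, X * (∑ w ∈ Sfin n, cc q n w • T w)
      = ∑ w ∈ Sfin (n+1), cc q (n+1) w • T w := by
    intro n
    rw [Finset.mul_sum]
    have e1 : ∀ w ∈ Sfin n, X * (cc q n w • T w)
        = (cc q n w * Ac q w) • T (shiftE w) + (cc q n w * Bc q w) • T (reflE w) := by
      rintro ⟨a, b⟩ _
      rw [mul_smul_comm, hX, Lmul q T hTmul hquad_s a b, smul_add, smul_smul, smul_smul]
      rfl
    rw [Finset.sum_congr rfl e1, Finset.sum_add_distrib]
    have hs1 : ∑ w ∈ Sfin n, (cc q n w * Ac q w) • T (shiftE w)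
        = ∑ w ∈ Sfin (n+1), (cc q n (w.1 + 1, w.2) * Ac q (w.1 + 1, w.2)) • T w := by
      have hmap : ∑ w ∈ (Sfin n).map shiftE,
          (cc q n (w.1 + 1, w.2) * Ac q (w.1 + 1, w.2)) • T w
          = ∑ w ∈ Sfin n, (cc q n w * Ac q w) • T (shiftE w) := by
        rw [Finset.sum_map]
        refine Finset.sum_congr rfl fun w _ => ?_
        obtain ⟨a, b⟩ := w
        simp only [shiftE_apply]
        rw [show a - 1 + 1 = a by ring]
      rw [← hmap]
      refine Finset.sum_subset ?_ ?_
      · intro w hw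
        rw [Finset.mem_map] at hw
        obtain ⟨u, hu, rfl⟩ := hw
        obtain ⟨a, b⟩ := u
        rw [mem_Sfin] at hu ⊢
        simp only [shiftE_apply] at hu ⊢
        push_cast
        omega
      · intro w hw hnot
        have hz : (n:ℤ) < |w.1 + 1| := by
          by_contra hle
          push_neg at hle
          refine hnot (Finset.mem_map.mpr ⟨(w.1 + 1, w.2), ?_, ?_⟩)
          · rw [mem_Sfin]
            exact abs_le.mp hle
          · obtain ⟨a, b⟩ := w
            simp only [shiftE_apply]
            rw [show a + 1 - 1 = a by ring]
        rw [show cc q n (w.1 + 1, w.2) = 0 from cc_zero q n _ _ hz, zero_mul, zero_smul]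
    have hs2 : ∑ w ∈ Sfin n, (cc q n w * Bc q w) • T (reflE w)
        = ∑ w ∈ Sfin (n+1), (cc q n (1 - w.1, !w.2) * Bc q (1 - w.1, !w.2)) • T w := by
      have hmap : ∑ w ∈ (Sfin n).map reflE,
          (cc q n (1 - w.1, !w.2) * Bc q (1 - w.1, !w.2)) • T w
          = ∑ w ∈ Sfin n, (cc q n w * Bc q w) • T (reflE w) := by
        rw [Finset.sum_map]
        refine Finset.sum_congr rfl fun w _ => ?_
        obtain ⟨a, b⟩ := w
        simp only [reflE_apply, Bool.not_not]
        rw [show (1:ℤ) - (1 - a) = a by ring]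
      rw [← hmap]
      refine Finset.sum_subset ?_ ?_
      · intro w hw
        rw [Finset.mem_map] at hw
        obtain ⟨u, hu, rfl⟩ := hw
        obtain ⟨a, b⟩ := u
        rw [mem_Sfin] at hu ⊢
        simp only [reflE_apply] at hu ⊢
        push_cast
        omega
      · intro w hw hnot
        have hz : (n:ℤ) < |1 - w.1| := by
          by_contra hle
          push_neg at hle
          refine hnot (Finset.mem_map.mpr ⟨(1 - w.1, !w.2), ?_, ?_⟩)
          · rw [mem_Sfin]
            exact abs_le.mp hle
          · obtain ⟨a, b⟩ := w
            simp only [reflE_apply, Bool.not_not]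
            rw [show (1:ℤ) - (1 - a) = a by ring]
        rw [show cc q n (1 - w.1, !w.2) = 0 from cc_zero q n _ _ hz, zero_mul, zero_smul]
    rw [hs1, hs2, ← Finset.sum_add_distrib]
    refine Finset.sum_congr rfl fun w _ => ?_
    rw [← add_smul, keyCC q hq n w]
  have hmain : ∀ n : ℕ, Y ^ n = v ^ n • ∑ w ∈ Sfin n, cc q n w • T w := by
    intro n
    induction n with
    | zero =>
        rw [pow_zero, pow_zero, one_smul]
        have h0 : Sfin 0 = {((0:ℤ), false), ((0:ℤ), true)} := by
          ext ⟨a, b⟩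
          rw [mem_Sfin]
          simp only [Finset.mem_insert, Finset.mem_singleton, Prod.mk.injEq]
          cases b <;> simp <;> omega
        have hcf : cc q 0 ((0:ℤ), false) = 1 := by
          rw [cc_false, cF, if_pos (by omega), if_pos ⟨by omega, by omega, by omega⟩]
          norm_num
        have hcg : cc q 0 ((0:ℤ), true) = 0 := by
          rw [cc_true, cG, if_neg (by omega)]
        rw [h0, Finset.sum_insert (by simp), Finset.sum_singleton, hcf, hcg, one_smul,
          zero_smul, add_zero, hT1]
    | succ n ih =>
        calc Y ^ (n+1) = Y * Y ^ n := pow_succ' Y n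
          _ = (v • X) * (v ^ n • ∑ w ∈ Sfin n, cc q n w • T w) := by rw [ih, hY]
          _ = (v ^ (n+1)) • (X * ∑ w ∈ Sfin n, cc q n w • T w) := by
              rw [smul_mul_assoc, mul_smul_comm, smul_smul, pow_succ']
          _ = v ^ (n+1) • ∑ w ∈ Sfin (n+1), cc q (n+1) w • T w := by rw [hstep n]
  have htau : ∀ n : ℕ, τ (Y ^ n) = v ^ n * cc q n (0, false) := by
    intro n
    rw [hmain n, map_smul, smul_eq_mul]
    congr 1
    rw [map_sum, Finset.sum_eq_single_of_mem ((0:ℤ), false)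
      (by rw [mem_Sfin]; constructor <;> simp)
      (fun w _ hne => by rw [map_smul, hτ, if_neg hne, smul_eq_mul, mul_zero])]
    rw [map_smul, hτ, if_pos rfl, smul_eq_mul, mul_one]
  have hneg : ∀ m : ℕ, ((θ ^ (-(m:ℤ)) : Hˣ) : H) = Y ^ m := by
    intro m
    rw [zpow_neg, zpow_natCast, ← inv_pow, Units.val_pow_eq_pow_val, hYval]
  have hposT : ∀ m : ℕ, ((θ ^ m : Hˣ) : H) = v ^ m • T ((m:ℤ), false) := by
    intro m
    induction m with
    | zero =>
        rw [pow_zero, Units.val_one, pow_zero, one_smul]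
        rw [show ((0:ℕ):ℤ) = (0:ℤ) from rfl, hT1]
    | succ m ih =>
        have e : A1mul ((m:ℤ), false) (1, false) = ((m:ℤ) + 1, false) := rfl
        have hmul : T ((m:ℤ), false) * T (1, false) = T ((m:ℤ) + 1, false) := by
          have h := hTmul ((m:ℤ), false) (1, false) (by rw [e]; simp [A1len]; omega)
          rw [e] at h
          exact h.symm
        rw [pow_succ, Units.val_mul, ih, hθ]
        rw [smul_mul_assoc, mul_smul_comm, smul_smul, hmul, ← pow_succ]
        norm_cast
  have hccodd : ∀ m : ℕ, ¬ (2:ℤ) ∣ (m:ℤ) → cc q m (0, false) = 0 := by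
    intro m hm
    rw [cc_false, cF, if_neg (by omega), if_neg (by omega)]
    norm_num
  have hcceven : ∀ K : ℕ, 1 ≤ K → cc q (2*K) (0, false)
      = ((q:ℂ) - 1) * ((q:ℂ) ^ (((2*K : ℕ)):ℤ) - 1) / ((q:ℂ) + 1) := by
    intro K hK
    rw [cc_false, cF, if_neg (by omega), if_pos ⟨by omega, by omega, by omega⟩,
      abs_zero, sub_zero, zero_add]
  refine ⟨?_, ?_, ?_⟩
  · intro n hn
    rcases lt_trichotomy n 0 with h | h | h
    · set m : ℕ := (-n).toNat with hm
      have hmz : (m:ℤ) = -n := Int.toNat_of_nonneg (by omega)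
      have hodd : ¬ (2:ℤ) ∣ (m:ℤ) := by
        intro hdvd
        obtain ⟨t, ht⟩ := hdvd
        exact hn ⟨t, by omega, by omega⟩
      rw [show n = -(m:ℤ) by omega, hneg m, htau m, hccodd m hodd, mul_zero]
    · exact absurd ⟨0, le_refl 0, by omega⟩ hn
    · set m : ℕ := n.toNat with hm
      have hmz : (m:ℤ) = n := Int.toNat_of_nonneg (by omega)
      have hne : ((m:ℤ), false) ≠ ((0:ℤ), false) := by
        simp only [Prod.mk.injEq, ne_eq]
        intro hcon
        omega
      rw [show n = (m:ℤ) by omega, zpow_natCast, hposT m, map_smul, smul_eq_mul, hτ,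
        if_neg hne, mul_zero]
  · rw [zpow_zero, Units.val_one, ← hT1, hτ, if_pos rfl]
  · intro k hk
    set K : ℕ := k.toNat with hKdef
    have hKz : (K:ℤ) = k := Int.toNat_of_nonneg hk.le
    have hK1 : 1 ≤ K := by omega
    rw [show -(2*k) = -(((2*K : ℕ)):ℤ) by push_cast; omega, hneg (2*K), htau (2*K),
      hcceven K hK1]
    have hvpow : v ^ (2*K) = ((q:ℂ)⁻¹) ^ K := by
      rw [pow_mul, pow_two, hvv]
    rw [hvpow, show ((q:ℂ) ^ (((2*K : ℕ)):ℤ)) = ((q:ℂ) ^ K)^2 by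
      rw [zpow_natCast, show 2*K = K*2 by ring, pow_mul],
      show k = (K:ℤ) from hKz.symm, zpow_natCast, zpow_neg, zpow_natCast]
    push_cast
    have hqK : (q:ℂ) ^ K ≠ 0 := pow_ne_zero _ hqC0
    field_simp
    ring_nf
    have h1 : (q:ℂ) ^ K * ((q:ℂ)⁻¹) ^ K = 1 := by
      rw [← mul_pow, mul_inv_cancel₀ hqC0, one_pow]
    linear_combination (1 - (q:ℂ) + ((q:ℂ) - 1) * (q:ℂ) ^ (K * 2)) * h1
end

section
/- For the rank-one c-function c(α,t) = (1 − q_{α^∨/2}^{-1/2} q_{α^∨}^{-1} t^{-1})/(1 − q_{α^∨/2}^{-1/2} t^{-1}) (written with t(−α) replaced by the variable t^{-1}), the expansion of 1/(q_{α^∨} c(α,t) c(α,t^{-1})) as a power series Σ_{k≥0} d(α;k) t^k has constant term d(α;0)=1 and for k > 0: d(α;k) = (q_{α^∨} − 1)(q_{α^∨/2} q_{α^∨} − 1)((q_{α^∨/2}^{1/2} q_{α^∨})^k − (q_{α^∨/2}^{1/2} q_{α^∨})^{-k})/(q_{α^∨/2} q_{α^∨}^2 − 1). -/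
open PowerSeries

private lemma coeff_quad (E : ℝ⟦X⟧) (c0 c1 c2 : ℝ) (n : ℕ) :
    coeff n (E * (C c0 + C c1 * X + C c2 * X^2)) =
      coeff n E * c0 + (if 1 ≤ n then coeff (n-1) E * c1 else 0)
        + (if 2 ≤ n then coeff (n-2) E * c2 else 0) := by
  have h1 : E * (C c1 * X) = (E * C c1) * X^1 := by ring
  have h2 : E * (C c2 * X^2) = (E * C c2) * X^2 := by ring
  rw [mul_add, mul_add, map_add, map_add, coeff_mul_C, h1, h2,
    coeff_mul_X_pow', coeff_mul_X_pow']
  split_ifs <;> simp [coeff_mul_C]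

set_option maxHeartbeats 1000000 in
theorem rank_one_generating_function
    (q₁ q₂ : ℝ) (hq₁ : 1 < q₁) (hq₂ : 1 ≤ q₂) :
    (PowerSeries.mk (fun k : ℕ =>
        if k = 0 then (1 : ℝ)
        else (q₁ - 1) * (q₂ * q₁ - 1)
            * ((Real.sqrt q₂ * q₁) ^ (k : ℤ) - (Real.sqrt q₂ * q₁) ^ (-(k : ℤ)))
            / (q₂ * q₁ ^ 2 - 1)))
      * (PowerSeries.C (R := ℝ) q₁
          * (PowerSeries.X - PowerSeries.C (R := ℝ) ((Real.sqrt q₂)⁻¹ * q₁⁻¹))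
          * (1 - PowerSeries.C (R := ℝ) ((Real.sqrt q₂)⁻¹ * q₁⁻¹) * PowerSeries.X))
    = (PowerSeries.X - PowerSeries.C (R := ℝ) (Real.sqrt q₂)⁻¹)
      * (1 - PowerSeries.C (R := ℝ) (Real.sqrt q₂)⁻¹ * PowerSeries.X) := by
  have hq₂0 : (0:ℝ) < q₂ := lt_of_lt_of_le one_pos hq₂
  have hq₁0 : (0:ℝ) < q₁ := lt_trans one_pos hq₁
  set s := Real.sqrt q₂ with hs_def
  have hs0 : 0 < s := Real.sqrt_pos.mpr hq₂0
  have hs2 : s ^ 2 = q₂ := Real.sq_sqrt hq₂0.le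
  have hsne : s ≠ 0 := hs0.ne'
  have hq₁ne : q₁ ≠ 0 := hq₁0.ne'
  have hxne : s * q₁ ≠ 0 := mul_ne_zero hsne hq₁ne
  have hden : q₂ * q₁ ^ 2 - 1 ≠ 0 := by nlinarith
  have hden' : s ^ 2 * q₁ ^ 2 - 1 ≠ 0 := by rw [hs2]; exact hden
  have hpow : ∀ k : ℕ, (s * q₁) ^ (k : ℤ) = (s * q₁) ^ k := fun k => zpow_natCast _ k
  have hpow' : ∀ k : ℕ, (s * q₁) ^ (-(k : ℤ)) = ((s * q₁) ^ k)⁻¹ := by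
    intro k; rw [zpow_neg, zpow_natCast]
  have hne : q₂ = s ^ 2 := hs2.symm
  have hL : (C q₁ * (X - C (s⁻¹ * q₁⁻¹)) * (1 - C (s⁻¹ * q₁⁻¹) * X) : ℝ⟦X⟧)
      = C (-(q₁*(s⁻¹ * q₁⁻¹))) + C (q₁*(1+(s⁻¹ * q₁⁻¹)^2)) * X
        + C (-(q₁*(s⁻¹ * q₁⁻¹))) * X^2 := by
    simp only [map_neg, map_mul, map_add, map_one, map_pow]; ring
  have hR : ((X - C s⁻¹) * (1 - C s⁻¹ * X) : ℝ⟦X⟧)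
      = (1 : ℝ⟦X⟧) * (C (-s⁻¹) + C (1+(s⁻¹)^2) * X + C (-s⁻¹) * X^2) := by
    simp only [map_neg, map_add, map_one, map_pow, one_mul]; ring
  rw [hL, hR]
  ext n
  rw [coeff_quad, coeff_quad]
  simp only [coeff_mk, coeff_one]
  match n with
  | 0 =>
    rw [if_neg (by omega : ¬(1:ℕ) ≤ 0), if_neg (by omega : ¬(2:ℕ) ≤ 0),
      if_pos (rfl : (0:ℕ) = 0)]
    norm_num
    field_simp
  | 1 =>
    rw [hpow, hpow']
    rw [if_pos (le_refl 1), if_neg (by omega : ¬(2:ℕ) ≤ 1),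
      if_neg (by omega : ¬(1:ℕ) = 0), show (1:ℕ)-1 = 0 from rfl,
      if_pos (rfl : (0:ℕ) = 0), hne]
    norm_num
    have h4 : q₁ ^ 2 * s ^ 2 - 1 ≠ 0 := by intro h; apply hden'; linarith
    field_simp
    ring
  | 2 =>
    rw [hpow, hpow', hpow, hpow']
    rw [show (2:ℕ)-1 = 1 from rfl, show (2:ℕ)-2 = 0 from rfl,
      if_pos (by omega : (1:ℕ) ≤ 2), if_pos (le_refl 2),
      if_neg (by omega : ¬(2:ℕ) = 0), if_neg (by omega : ¬(1:ℕ) = 0),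
      if_pos (rfl : (0:ℕ) = 0), hne]
    norm_num
    field_simp
    ring
  | (n+3) =>
    rw [hpow, hpow', hpow, hpow', hpow, hpow']
    rw [show n+3-1 = n+2 from rfl, show n+3-2 = n+1 from rfl,
      if_pos (by omega : 1 ≤ n+3), if_pos (by omega : 2 ≤ n+3),
      if_neg (by omega : ¬n+3 = 0), if_neg (by omega : ¬n+2 = 0),
      if_neg (by omega : ¬n+1 = 0), hne]
    have h1 : (s * q₁) ^ (n+1) ≠ 0 := pow_ne_zero _ hxne
    have h2 : (s * q₁) ^ (n+2) ≠ 0 := pow_ne_zero _ hxne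
    have h3 : (s * q₁) ^ (n+3) ≠ 0 := pow_ne_zero _ hxne
    norm_num
    field_simp
    ring
end

section
/- In the Iwahori-Hecke algebra of a root datum with 2α ∉ R_nr for a fundamental root α, the intertwining element R_s = (1 − θ_{−α}) T_s + (1 − q_{α^∨}) satisfies R_s θ_x = θ_{s(x)} R_s for all x ∈ X, where s = s_α. -/
/- STATEMENT 13: In the Iwahori-Hecke algebra of a root datum with `2α ∉ R_nr` for a
fundamental root `α`, the intertwining element `R_s = (1 − θ_{−α}) T_s + (1 − q_{α^∨})`
satisfies `R_s θ_x = θ_{s(x)} R_s` for all `x ∈ X`, where `s = s_α`.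

Setup: `θ : X → H` is the Bernstein embedding of `ℂ[X]`, `αv = α^∨` gives the pairing
with the coroot (so `s(x) = x − (x,α^∨) α`), and the Bernstein-Lusztig relation
`θ_x T_s − T_s θ_{s(x)} = (q_{α^∨} − 1)(θ_x − θ_{s(x)})/(1 − θ_{−α})` holds, the quotient
being the genuine Laurent polynomial
`∑_{j=0}^{(x,α^∨)−1} θ_{x−jα}` if `(x,α^∨) ≥ 0`, and
`−∑_{j=0}^{−(x,α^∨)−1} θ_{s(x)−jα}` otherwise. -/
theorem intertwiner_commutation
    (H : Type*) [Ring H] [Algebra ℂ H]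
    (X : Type*) [AddCommGroup X]
    (θ : X → H) (hθ0 : θ 0 = 1) (hθmul : ∀ x y, θ (x + y) = θ x * θ y)
    (α : X) (αv : X →+ ℤ) (hαα : αv α = 2)
    (Ts : H) (qs : ℝ) (hqs : 1 < qs)
    (hquad : (Ts + 1) * (Ts - (qs : ℂ) • 1) = 0)
    (hBL : ∀ x : X,
      θ x * Ts - Ts * θ (x - αv x • α)
        = ((qs - 1 : ℝ) : ℂ) •
            (if 0 ≤ αv x
              then ∑ j ∈ Finset.range (αv x).toNat, θ (x - (j : ℤ) • α)
              else - ∑ j ∈ Finset.range (-(αv x)).toNat, θ ((x - αv x • α) - (j : ℤ) • α))) :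
    ∀ x : X,
      ((1 - θ (-α)) * Ts + ((1 - qs : ℝ) : ℂ) • 1) * θ x
        = θ (x - αv x • α) * ((1 - θ (-α)) * Ts + ((1 - qs : ℝ) : ℂ) • 1) := by
  -- telescoping lemma
  have tele : ∀ (z : X) (n : ℕ),
      (1 - θ (-α)) * ∑ j ∈ Finset.range n, θ (z - (j : ℤ) • α)
        = θ z - θ (z - (n : ℤ) • α) := by
    intro z n
    induction n with
    | zero => simp [hθ0]
    | succ n ih =>
      rw [Finset.sum_range_succ, mul_add, ih]
      have h1 : (1 - θ (-α)) * θ (z - (n : ℤ) • α)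
          = θ (z - (n : ℤ) • α) - θ (z - ((n + 1 : ℕ) : ℤ) • α) := by
        rw [sub_mul, one_mul, ← hθmul]
        congr 2
        push_cast
        rw [add_smul, one_smul]
        abel
      rw [h1]
      abel
  -- key identity: (1 - θ(-α)) * P(z) = θ z - θ (s z)
  have hP : ∀ z : X,
      (1 - θ (-α)) *
        (if 0 ≤ αv z
          then ∑ j ∈ Finset.range (αv z).toNat, θ (z - (j : ℤ) • α)
          else - ∑ j ∈ Finset.range (-(αv z)).toNat, θ ((z - αv z • α) - (j : ℤ) • α))
        = θ z - θ (z - αv z • α) := by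
    intro z
    by_cases h : 0 ≤ αv z
    · rw [if_pos h, tele, Int.toNat_of_nonneg h]
    · rw [if_neg h, mul_neg, tele]
      rw [Int.toNat_of_nonneg (by omega : (0:ℤ) ≤ -(αv z))]
      have : z - αv z • α - (-(αv z)) • α = z := by
        rw [neg_smul]; abel
      rw [this]; abel
  intro x
  set n : ℤ := αv x with hn
  set y : X := x - n • α with hy
  have hαy : αv y = -n := by
    simp [hy, map_zsmul, hαα]; ring
  have hyx : y - (-n) • α = x := by
    rw [neg_smul, hy]; abel
  have hBLy := hBL y
  rw [hαy, hyx] at hBLy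
  have hTx : Ts * θ x = θ y * Ts - ((qs - 1 : ℝ) : ℂ) •
      (if 0 ≤ -n
        then ∑ j ∈ Finset.range (-n).toNat, θ (y - (j : ℤ) • α)
        else - ∑ j ∈ Finset.range (-(-n)).toNat, θ (x - (j : ℤ) • α)) := by
    rw [← hBLy]; abel
  have hPy := hP y
  rw [hαy, hyx] at hPy
  have hcomm : (1 - θ (-α)) * θ y = θ y * (1 - θ (-α)) := by
    rw [sub_mul, mul_sub, one_mul, mul_one, ← hθmul, ← hθmul, add_comm]
  have hc : ((1 - qs : ℝ) : ℂ) = -((qs - 1 : ℝ) : ℂ) := by push_cast; ring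
  calc ((1 - θ (-α)) * Ts + ((1 - qs : ℝ) : ℂ) • 1) * θ x
      = (1 - θ (-α)) * (Ts * θ x) + ((1 - qs : ℝ) : ℂ) • θ x := by
        rw [add_mul, mul_assoc, smul_mul_assoc, one_mul]
    _ = (1 - θ (-α)) * (θ y * Ts) - ((qs - 1 : ℝ) : ℂ) • ((1 - θ (-α)) *
          (if 0 ≤ -n
            then ∑ j ∈ Finset.range (-n).toNat, θ (y - (j : ℤ) • α)
            else - ∑ j ∈ Finset.range (-(-n)).toNat, θ (x - (j : ℤ) • α)))
          + ((1 - qs : ℝ) : ℂ) • θ x := by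
        rw [hTx, mul_sub, mul_smul_comm]
    _ = θ y * ((1 - θ (-α)) * Ts) - ((qs - 1 : ℝ) : ℂ) • (θ y - θ x)
          + ((1 - qs : ℝ) : ℂ) • θ x := by
        rw [hPy, ← mul_assoc, hcomm, mul_assoc]
    _ = θ y * ((1 - θ (-α)) * Ts + ((1 - qs : ℝ) : ℂ) • 1) := by
        rw [mul_add, mul_smul_comm, mul_one, hc]
        module
end
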